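/- Let m, n ≥ 2 and let (S,T) be an irreducible Cuntz-type atomic representation of F_θ^+ on H with standard basis {ξ_t}. Assume the 2-graph is periodic, witnessed at the operator level: there exist integers a,b > 0 and a bijection γ from the set of words of length a over {1,…,m} onto the set of words of length b over {1,…,n} such that S_uT_v = T_{γ(u)}S_{γ^{-1}(v)} for every word u of length a and every word v of length b. Assume moreover that one of the following holds: (type 1) some standard basis vector ξ satisfies S_{u_0}ξ ∈ 𝕋ξ for some nonempty word u_0 and some standard basis vector ξ' satisfies T_{v_0}ξ' ∈ 𝕋ξ' for some nonempty word v_0; or (type 3b(ii)) no standard basis vector ξ admits nonempty words u, v with S_uξ ∈ 𝕋ξ, or T_vξ ∈ 𝕋ξ, or T_vS_uξ ∈ 𝕋ξ, and there exist integers k,l > 0, a standard basis vector ξ_0, words u_0,u_{-1},u_{-2},… each of length k over {1,…,m}, and words v_0,v_{-1},v_{-2},… each of length l over {1,…,n}, such that T_{v_{d+1}}S_{u_d} = S_{u_{d+1}}T_{v_d} for every d ≤ −1 and, for every t ≥ 0, the vector T_{v_0v_{-1}⋯v_{-t}}*ξ_0 is a nonzero unimodular scalar multiple of S_{u_0u_{-1}⋯u_{-t}}*ξ_0.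 Then (S,T) has no wandering vectors. -/

import Mathlib

noncomputable section

open scoped InnerProductSpace ComplexInnerProductSpace Classical

section GeneralDefs

variable {E : Type*} [NormedAddCommGroup E] [InnerProductSpace ℂ E]

/-- The operator associated to a word: `wordOp V [a₁, …, a_r] = V a₁ * ⋯ * V a_r`. -/
def wordOp {ι : Type*} (V : ι → E →L[ℂ] E) (w : List ι) : E →L[ℂ] E :=
  (w.map V).prod

/-- The operator associated to a word of fixed length `k` given as a function `Fin k → ι`. -/
def fnWordOp {ι : Type*} {k : ℕ} (V : ι → E →L[ℂ] E) (u : Fin k → ι) : E →L[ℂ] E :=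
  wordOp V (List.ofFn u)

/-- The closure of a set of operators in the weak operator topology, described via
basic WOT-neighbourhoods (finitely many vector functionals). -/
def wotClosure (S : Set (E →L[ℂ] E)) : Set (E →L[ℂ] E) :=
  {A | ∀ ε > (0 : ℝ), ∀ F : Finset (E × E), ∃ B ∈ S, ∀ p ∈ F, ‖⟪p.1, (A - B) p.2⟫‖ < ε}

/-- The unital WOT-closed algebra generated by a set of operators. -/
def genWotAlg (G : Set (E →L[ℂ] E)) : Set (E →L[ℂ] E) :=
  wotClosure ((Algebra.adjoin ℂ G : Subalgebra ℂ (E →L[ℂ] E)) : Set (E →L[ℂ] E))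

/-- A wandering vector for a row-isometry `V = [V_a : a ∈ ι]`: a unit vector whose orbit
under all words in the `V_a` is an orthonormal family. -/
def IsWandering {ι : Type*} (V : ι → E →L[ℂ] E) (ζ : E) : Prop :=
  ‖ζ‖ = 1 ∧ ∀ w w' : List ι,
    ⟪wordOp V w ζ, wordOp V w' ζ⟫ = if w = w' then 1 else 0

/-- Restriction of an operator to an invariant subspace (junk value `0` if not invariant). -/
def restrictCLM (A : E →L[ℂ] E) (M : Submodule ℂ E) : M →L[ℂ] M :=
  if h : ∀ x ∈ M, A x ∈ M then
    { toFun := fun x => ⟨A x, h x x.2⟩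
      map_add' := by intro x y; ext; simp
      map_smul' := by intro c x; ext; simp
      cont := Continuous.subtype_mk (A.continuous.comp continuous_subtype_val) _ }
  else 0

/-- The unital WOT-closed algebra on `M` generated by the restrictions of the `V a` to `M`. -/
def rowAlgOn {ι : Type*} (V : ι → E →L[ℂ] E) (M : Submodule ℂ E) : Set (M →L[ℂ] M) :=
  genWotAlg (Set.range fun a => restrictCLM (V a) M)

/-- The unital WOT-closed algebra on `M` generated by the restrictions of the `V a`
is self-adjoint. -/
def restrictedAlgSelfAdjoint {ι : Type*} (V : ι → E →L[ℂ] E) (M : Submodule ℂ E) : Prop :=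
  ∀ A ∈ rowAlgOn V M, ∃ B ∈ rowAlgOn V M,
    ∀ x y : M, ⟪((A x : M) : E), (y : E)⟫ = ⟪(x : E), ((B y : M) : E)⟫

variable [CompleteSpace E]

/-- A row-isometry is of dilation type if it is defect free and has no nonzero reducing
subspace on which it is either absolutely continuous (spanned by wandering vectors) or
singular (generating a self-adjoint WOT-closed algebra). -/
def IsDilationType {ι : Type*} [Fintype ι] (V : ι → E →L[ℂ] E) : Prop :=
  (∑ a, V a * star (V a)) = 1 ∧
    ¬ ∃ M : Submodule ℂ E, M ≠ ⊥ ∧ IsClosed (M : Set E) ∧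
      (∀ a, ∀ x ∈ M, V a x ∈ M) ∧ (∀ a, ∀ x ∈ M, star (V a) x ∈ M) ∧
      ((M = (Submodule.span ℂ {ζ : E | ζ ∈ M ∧ IsWandering V ζ}).topologicalClosure) ∨
        restrictedAlgSelfAdjoint V M)

end GeneralDefs

/-- An isometric representation of the single-vertex 2-graph `F_θ⁺` on a Hilbert space `H`. -/
structure TwoGraphRep (m n : ℕ) (θ : Equiv.Perm (Fin m × Fin n)) (H : Type*)
    [NormedAddCommGroup H] [InnerProductSpace ℂ H] [CompleteSpace H] where
  S : Fin m → H →L[ℂ] H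
  T : Fin n → H →L[ℂ] H
  isometS : ∀ i i', star (S i) * S i' = if i = i' then 1 else 0
  isometT : ∀ j j', star (T j) * T j' = if j = j' then 1 else 0
  comm : ∀ i j, S i * T j = T (θ (i, j)).2 * S (θ (i, j)).1

namespace TwoGraphRep

variable {m n : ℕ} {θ : Equiv.Perm (Fin m × Fin n)} {H : Type*}
  [NormedAddCommGroup H] [InnerProductSpace ℂ H] [CompleteSpace H]

/-- A representation is of Cuntz type if both row-isometries are defect free. -/
def CuntzType (ρ : TwoGraphRep m n θ H) : Prop :=
  (∑ i, ρ.S i * star (ρ.S i)) = 1 ∧ (∑ j, ρ.T j * star (ρ.T j)) = 1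

/-- The nonself-adjoint 2-graph algebra `𝔖`: the unital WOT-closed algebra generated by
the `S_i` and `T_j`. -/
def alg (ρ : TwoGraphRep m n θ H) : Set (H →L[ℂ] H) :=
  genWotAlg (Set.range ρ.S ∪ Set.range ρ.T)

/-- The von Neumann algebra generated by the `S_i` and `T_j`: the WOT-closure of the
unital *-algebra they generate. -/
def vnAlg (ρ : TwoGraphRep m n θ H) : Set (H →L[ℂ] H) :=
  genWotAlg ((Set.range ρ.S ∪ Set.range ρ.T) ∪ star '' (Set.range ρ.S ∪ Set.range ρ.T))

/-- Wandering vector for the row-isometry `[S_u T_v : |u| = k, |v| = l]`. -/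
def IsWanderingKL (ρ : TwoGraphRep m n θ H) (k l : ℕ) (ζ : H) : Prop :=
  ‖ζ‖ = 1 ∧ ∀ (p p' : ℕ) (u u' : List (Fin m)) (v v' : List (Fin n)),
    u.length = p * k → v.length = p * l → u'.length = p' * k → v'.length = p' * l →
    ⟪(wordOp ρ.S u * wordOp ρ.T v) ζ, (wordOp ρ.S u' * wordOp ρ.T v') ζ⟫ =
      if u = u' ∧ v = v' then 1 else 0

/-- The range of the structure projection `P_{k,l}`: the orthogonal complement of the
closed linear span of the wandering vectors of `[S_u T_v : |u| = k, |v| = l]`. -/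
def structSpaceKL (ρ : TwoGraphRep m n θ H) (k l : ℕ) : Submodule ℂ H :=
  ((Submodule.span ℂ {ζ : H | ρ.IsWanderingKL k l ζ}).topologicalClosure)ᗮ

/-- The range of the first structure projection `P = ⋀_{k,l>0} P_{k,l}`. -/
def firstStructSpace (ρ : TwoGraphRep m n θ H) : Submodule ℂ H :=
  ⨅ (k : ℕ) (l : ℕ) (_ : 0 < k) (_ : 0 < l), ρ.structSpaceKL k l

/-- The row-isometry `[S_u T_v : |u| = k, |v| = l]`. -/
def rowKL (ρ : TwoGraphRep m n θ H) (k l : ℕ) :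
    ((Fin k → Fin m) × (Fin l → Fin n)) → H →L[ℂ] H :=
  fun p => fnWordOp ρ.S p.1 * fnWordOp ρ.T p.2

/-- A wandering vector for the representation `(S,T)`. -/
def IsWanderingRep (ρ : TwoGraphRep m n θ H) (ζ : H) : Prop :=
  ‖ζ‖ = 1 ∧ ∀ (u u' : List (Fin m)) (v v' : List (Fin n)),
    ⟪(wordOp ρ.S u * wordOp ρ.T v) ζ, (wordOp ρ.S u' * wordOp ρ.T v') ζ⟫ =
      if u = u' ∧ v = v' then 1 else 0

/-- The representation is irreducible: the only closed subspaces invariant under all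
`S_i, T_j, S_i*, T_j*` are `⊥` and `⊤`. -/
def Irreducible (ρ : TwoGraphRep m n θ H) : Prop :=
  ∀ M : Submodule ℂ H, IsClosed (M : Set H) →
    (∀ i, ∀ x ∈ M, ρ.S i x ∈ M) → (∀ i, ∀ x ∈ M, star (ρ.S i) x ∈ M) →
    (∀ j, ∀ x ∈ M, ρ.T j x ∈ M) → (∀ j, ∀ x ∈ M, star (ρ.T j) x ∈ M) →
    M = ⊥ ∨ M = ⊤

/-- The representation is atomic with standard basis `ξ`: every generator maps each basis
vector to a unimodular multiple of a basis vector. -/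
def AtomicBasis {Λ : Type*} (ρ : TwoGraphRep m n θ H) (ξ : HilbertBasis Λ ℂ H) : Prop :=
  (∀ i t, ∃ (c : ℂ) (t' : Λ), ‖c‖ = 1 ∧ ρ.S i (ξ t) = c • ξ t') ∧
  (∀ j t, ∃ (c : ℂ) (t' : Λ), ‖c‖ = 1 ∧ ρ.T j (ξ t) = c • ξ t')

/-- `x` has a blue ring: `S_u x ∈ 𝕋x` for some nonempty word `u`. -/
def HasBlueRing (ρ : TwoGraphRep m n θ H) (x : H) : Prop :=
  ∃ u : List (Fin m), u ≠ [] ∧ ∃ c : ℂ, ‖c‖ = 1 ∧ wordOp ρ.S u x = c • x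

/-- `x` has a red ring: `T_v x ∈ 𝕋x` for some nonempty word `v`. -/
def HasRedRing (ρ : TwoGraphRep m n θ H) (x : H) : Prop :=
  ∃ v : List (Fin n), v ≠ [] ∧ ∃ c : ℂ, ‖c‖ = 1 ∧ wordOp ρ.T v x = c • x

/-- `x` has a mixed ring: `T_v S_u x ∈ 𝕋x` for some nonempty words `u`, `v`. -/
def HasMixedRing (ρ : TwoGraphRep m n θ H) (x : H) : Prop :=
  ∃ (u : List (Fin m)) (v : List (Fin n)), u ≠ [] ∧ v ≠ [] ∧
    ∃ c : ℂ, ‖c‖ = 1 ∧ wordOp ρ.T v (wordOp ρ.S u x) = c • x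

end TwoGraphRep
set_option linter.unusedSectionVars false

section WordMachinery

variable {H : Type*} [NormedAddCommGroup H] [InnerProductSpace ℂ H] [CompleteSpace H]

lemma wordOp_nil {ι : Type*} (V : ι → H →L[ℂ] H) : wordOp V ([] : List ι) = 1 := rfl

lemma wordOp_cons {ι : Type*} (V : ι → H →L[ℂ] H) (x : ι) (w : List ι) :
    wordOp V (x :: w) = V x * wordOp V w := by simp [wordOp]

lemma wordOp_append {ι : Type*} (V : ι → H →L[ℂ] H) (w₁ w₂ : List ι) :
    wordOp V (w₁ ++ w₂) = wordOp V w₁ * wordOp V w₂ := by simp [wordOp]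

lemma fnWordOp_cons {ι : Type*} {k : ℕ} (V : ι → H →L[ℂ] H) (x : ι) (w : Fin k → ι) :
    fnWordOp V (Fin.cons x w) = V x * fnWordOp V w := by
  simp only [fnWordOp, List.ofFn_succ, Fin.cons_zero, Fin.cons_succ, wordOp_cons]

lemma ofFn_snoc {ι : Type*} {k : ℕ} (x : ι) (w : Fin k → ι) :
    List.ofFn (Fin.snoc w x) = List.ofFn w ++ [x] := by
  rw [List.ofFn_succ']
  simp [Fin.snoc_castSucc, Fin.snoc_last, List.concat_eq_append]

lemma fnWordOp_snoc {ι : Type*} {k : ℕ} (V : ι → H →L[ℂ] H) (x : ι) (w : Fin k → ι) :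
    fnWordOp V (Fin.snoc w x) = fnWordOp V w * V x := by
  simp only [fnWordOp, ofFn_snoc, wordOp_append]
  simp [wordOp]

lemma wordOp_star_mul {ι : Type*} [DecidableEq ι] (V : ι → H →L[ℂ] H)
    (hV : ∀ i i', star (V i) * V i' = if i = i' then 1 else 0) :
    ∀ (w w' : List ι), w.length = w'.length →
      star (wordOp V w) * wordOp V w' = if w = w' then 1 else 0 := by
  intro w
  induction w with
  | nil =>
    intro w' h
    cases w' with
    | nil => simp [wordOp_nil]
    | cons x w => simp at h
  | cons x w ih =>
    intro w' h
    cases w' with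
    | nil => simp at h
    | cons x' w'' =>
      have hlen : w.length = w''.length := by simpa using h
      have key : star (wordOp V (x :: w)) * wordOp V (x' :: w'') =
          star (wordOp V w) * ((star (V x) * V x') * wordOp V w'') := by
        rw [wordOp_cons, wordOp_cons, star_mul]
        noncomm_ring
      rw [key, hV x x']
      by_cases hx : x = x'
      · subst hx
        rw [if_pos rfl, one_mul, ih w'' hlen]
        by_cases hw : w = w''
        · subst hw; simp
        · rw [if_neg hw, if_neg (by simp [hw])]
      · rw [if_neg hx, zero_mul, mul_zero, if_neg (by simp [hx])]

lemma fnWordOp_star_mul {ι : Type*} [DecidableEq ι] {k : ℕ} (V : ι → H →L[ℂ] H)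
    (hV : ∀ i i', star (V i) * V i' = if i = i' then 1 else 0) (u u' : Fin k → ι) :
    star (fnWordOp V u) * fnWordOp V u' = if u = u' then 1 else 0 := by
  rw [fnWordOp, fnWordOp, wordOp_star_mul V hV _ _ (by simp)]
  by_cases h : u = u'
  · subst h; simp
  · rw [if_neg (by simpa [List.ofFn_inj] using h), if_neg h]

lemma sum_fnWordOp_mul_star {m : ℕ} (V : Fin m → H →L[ℂ] H)
    (hV : ∑ i, V i * star (V i) = 1) :
    ∀ k, ∑ u : Fin k → Fin m, fnWordOp V u * star (fnWordOp V u) = 1 := by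
  intro k
  induction k with
  | zero =>
    rw [Fintype.sum_unique]
    simp [fnWordOp, wordOp_nil]
  | succ k ih =>
    rw [← Equiv.sum_comp (Fin.consEquiv (fun _ => Fin m))
      (fun u => fnWordOp V u * star (fnWordOp V u)), Fintype.sum_prod_type]
    have : ∀ (i : Fin m) (w : Fin k → Fin m),
        fnWordOp V (Fin.consEquiv (fun _ => Fin m) (i, w)) *
          star (fnWordOp V (Fin.consEquiv (fun _ => Fin m) (i, w))) =
        V i * (fnWordOp V w * star (fnWordOp V w)) * star (V i) := by
      intro i w
      show fnWordOp V (Fin.cons i w) * star (fnWordOp V (Fin.cons i w)) = _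
      rw [fnWordOp_cons, star_mul]
      noncomm_ring
    simp_rw [this]
    calc ∑ i : Fin m, ∑ w : Fin k → Fin m, V i * (fnWordOp V w * star (fnWordOp V w)) * star (V i)
        = ∑ i : Fin m, V i * (∑ w : Fin k → Fin m, fnWordOp V w * star (fnWordOp V w)) * star (V i) := by
          congr 1; ext i; rw [Finset.mul_sum, Finset.sum_mul]
      _ = 1 := by rw [ih]; simpa using hV

end WordMachinery
section MoveMachinery

variable {m n : ℕ}

/-- T-word part of moving a single `S` letter past a `T`-word. -/
def lmV (θ : Equiv.Perm (Fin m × Fin n)) : Fin m → List (Fin n) → List (Fin n)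
  | _, [] => []
  | i, j :: v => (θ (i, j)).2 :: lmV θ (θ (i, j)).1 v

/-- S-letter part of moving a single `S` letter past a `T`-word. -/
def lmI (θ : Equiv.Perm (Fin m × Fin n)) : Fin m → List (Fin n) → Fin m
  | i, [] => i
  | i, j :: v => lmI θ (θ (i, j)).1 v

/-- T-word part of moving an `S`-word past a `T`-word. -/
def mvV (θ : Equiv.Perm (Fin m × Fin n)) : List (Fin m) → List (Fin n) → List (Fin n)
  | [], v => v
  | i :: u, v => lmV θ i (mvV θ u v)

/-- S-word part of moving an `S`-word past a `T`-word. -/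
def mvI (θ : Equiv.Perm (Fin m × Fin n)) : List (Fin m) → List (Fin n) → List (Fin m)
  | [], _ => []
  | i :: u, v => lmI θ i (mvV θ u v) :: mvI θ u v

lemma lmV_length (θ : Equiv.Perm (Fin m × Fin n)) :
    ∀ (v : List (Fin n)) (i : Fin m), (lmV θ i v).length = v.length := by
  intro v
  induction v with
  | nil => intro i; simp [lmV]
  | cons j v ih => intro i; simp [lmV, ih]

lemma mvV_length (θ : Equiv.Perm (Fin m × Fin n)) :
    ∀ (u : List (Fin m)) (v : List (Fin n)), (mvV θ u v).length = v.length := by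
  intro u
  induction u with
  | nil => intro v; simp [mvV]
  | cons i u ih => intro v; simp [mvV, lmV_length, ih]

lemma mvI_length (θ : Equiv.Perm (Fin m × Fin n)) :
    ∀ (u : List (Fin m)) (v : List (Fin n)), (mvI θ u v).length = u.length := by
  intro u
  induction u with
  | nil => intro v; simp [mvI]
  | cons i u ih => intro v; simp [mvI, ih]

lemma mvV_append (θ : Equiv.Perm (Fin m × Fin n)) :
    ∀ (u₁ u₂ : List (Fin m)) (v : List (Fin n)),
      mvV θ (u₁ ++ u₂) v = mvV θ u₁ (mvV θ u₂ v) := by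
  intro u₁
  induction u₁ with
  | nil => intro u₂ v; simp [mvV]
  | cons i u ih => intro u₂ v; simp [mvV, ih]

lemma mvI_append (θ : Equiv.Perm (Fin m × Fin n)) :
    ∀ (u₁ u₂ : List (Fin m)) (v : List (Fin n)),
      mvI θ (u₁ ++ u₂) v = mvI θ u₁ (mvV θ u₂ v) ++ mvI θ u₂ v := by
  intro u₁
  induction u₁ with
  | nil => intro u₂ v; simp [mvI, mvV]
  | cons i u ih => intro u₂ v; simp [mvI, mvV, mvV_append, ih]

variable {H : Type*} [NormedAddCommGroup H] [InnerProductSpace ℂ H] [CompleteSpace H]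
variable {S : Fin m → H →L[ℂ] H} {T : Fin n → H →L[ℂ] H} {θ : Equiv.Perm (Fin m × Fin n)}

lemma lm_op (hcomm : ∀ i j, S i * T j = T (θ (i, j)).2 * S (θ (i, j)).1) :
    ∀ (v : List (Fin n)) (i : Fin m),
      S i * wordOp T v = wordOp T (lmV θ i v) * S (lmI θ i v) := by
  intro v
  induction v with
  | nil => intro i; simp [lmV, lmI, wordOp_nil]
  | cons j v ih =>
    intro i
    rw [wordOp_cons, ← mul_assoc, hcomm i j, mul_assoc, ih (θ (i, j)).1]
    show _ = wordOp T ((θ (i, j)).2 :: lmV θ (θ (i, j)).1 v) * S (lmI θ (θ (i,j)).1 v)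
    rw [wordOp_cons]
    noncomm_ring

lemma mv_op (hcomm : ∀ i j, S i * T j = T (θ (i, j)).2 * S (θ (i, j)).1) :
    ∀ (u : List (Fin m)) (v : List (Fin n)),
      wordOp S u * wordOp T v = wordOp T (mvV θ u v) * wordOp S (mvI θ u v) := by
  intro u
  induction u with
  | nil => intro v; simp [mvV, mvI, wordOp_nil]
  | cons i u ih =>
    intro v
    rw [wordOp_cons, mul_assoc, ih v]
    show _ = wordOp T (lmV θ i (mvV θ u v)) * wordOp S (lmI θ i (mvV θ u v) :: mvI θ u v)
    rw [wordOp_cons, ← mul_assoc, lm_op hcomm (mvV θ u v) i]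
    noncomm_ring

/-- Uniqueness of the `T`-word/`S`-word decomposition, given a nonzero vector. -/
lemma word_unique (hvec : ∃ ζ : H, ζ ≠ 0)
    (hS : ∀ i i', star (S i) * S i' = if i = i' then 1 else 0)
    (hT : ∀ j j', star (T j) * T j' = if j = j' then 1 else 0)
    {x₁ x₂ : List (Fin n)} {y₁ y₂ : List (Fin m)}
    (hlx : x₁.length = x₂.length) (hly : y₁.length = y₂.length)
    (h : wordOp T x₁ * wordOp S y₁ = wordOp T x₂ * wordOp S y₂) :
    x₁ = x₂ ∧ y₁ = y₂ := by
  obtain ⟨ζ, hζ⟩ := hvec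
  have habs : ∀ (y : List (Fin m)), wordOp S y ≠ 0 := by
    intro y hy
    have h1 : star (wordOp S y) * wordOp S y = 1 := by
      rw [wordOp_star_mul S hS y y rfl, if_pos rfl]
    rw [hy, mul_zero] at h1
    apply hζ
    calc ζ = (1 : H →L[ℂ] H) ζ := rfl
      _ = (0 : H →L[ℂ] H) ζ := by rw [← h1]
      _ = 0 := rfl
  have hx : x₂ = x₁ := by
    by_contra hne
    have h2 := congrArg (fun X => star (wordOp T x₂) * X) h
    simp only [← mul_assoc] at h2
    rw [wordOp_star_mul T hT x₂ x₁ hlx.symm, if_neg hne,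
      wordOp_star_mul T hT x₂ x₂ rfl, if_pos rfl, zero_mul, one_mul] at h2
    exact habs y₂ h2.symm
  subst hx
  have h3 := congrArg (fun X => star (wordOp T x₂) * X) h
  simp only [← mul_assoc] at h3
  rw [wordOp_star_mul T hT x₂ x₂ rfl, if_pos rfl, one_mul, one_mul] at h3
  refine ⟨rfl, ?_⟩
  by_contra hne
  have h4 := congrArg (fun X => star (wordOp S y₂) * X) h3
  rw [wordOp_star_mul S hS y₂ y₁ hly.symm, if_neg (fun hh => hne hh.symm),
    wordOp_star_mul S hS y₂ y₂ rfl, if_pos rfl] at h4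
  apply hζ
  calc ζ = (1 : H →L[ℂ] H) ζ := rfl
    _ = (0 : H →L[ℂ] H) ζ := by rw [h4]
    _ = 0 := rfl

end MoveMachinery
section GammaMoves

variable {H : Type*} [NormedAddCommGroup H] [InnerProductSpace ℂ H] [CompleteSpace H]
variable {m n a' b' : ℕ}
variable {S : Fin m → H →L[ℂ] H} {T : Fin n → H →L[ℂ] H} {θ : Equiv.Perm (Fin m × Fin n)}
variable {γ : (Fin (a' + 1) → Fin m) ≃ (Fin (b' + 1) → Fin n)}

lemma exists_ofFn {α : Type*} {k : ℕ} (z : List α) (h : z.length = k) :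
    ∃ f : Fin k → α, z = List.ofFn f := by
  subst h
  exact ⟨z.get, (List.ofFn_get z).symm⟩

lemma ofFn_cons {α : Type*} {k : ℕ} (x : α) (w : Fin k → α) :
    List.ofFn (Fin.cons x w) = x :: List.ofFn w := by
  simp [List.ofFn_succ]

section WithHyps

variable (hcomm : ∀ i j, S i * T j = T (θ (i, j)).2 * S (θ (i, j)).1)
variable (hS : ∀ i i', star (S i) * S i' = if i = i' then 1 else 0)
variable (hT : ∀ j j', star (T j) * T j' = if j = j' then 1 else 0)
variable (hper : ∀ (u : Fin (a' + 1) → Fin m) (v : Fin (b' + 1) → Fin n),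
  fnWordOp S u * fnWordOp T v = fnWordOp T (γ u) * fnWordOp S (γ.symm v))
variable (hvec : ∃ ζ : H, ζ ≠ 0)

include hcomm hS hT hper hvec

lemma mv_eq_per (u : Fin (a' + 1) → Fin m) (v : Fin (b' + 1) → Fin n) :
    mvV θ (List.ofFn u) (List.ofFn v) = List.ofFn (γ u) ∧
    mvI θ (List.ofFn u) (List.ofFn v) = List.ofFn (γ.symm v) := by
  have h1 := mv_op hcomm (List.ofFn u) (List.ofFn v)
  rw [show wordOp S (List.ofFn u) * wordOp T (List.ofFn v) =
      fnWordOp S u * fnWordOp T v from rfl, hper u v] at h1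
  have h2 := word_unique hvec hS hT
    (x₁ := mvV θ (List.ofFn u) (List.ofFn v)) (x₂ := List.ofFn (γ u))
    (y₁ := mvI θ (List.ofFn u) (List.ofFn v)) (y₂ := List.ofFn (γ.symm v))
    (by rw [mvV_length]; simp) (by rw [mvI_length]; simp) h1.symm
  exact h2

lemma lmV_gamma (i : Fin m) (w' : Fin a' → Fin m) (j : Fin m) :
    lmV θ i (List.ofFn (γ (Fin.snoc w' j))) = List.ofFn (γ (Fin.cons i w')) := by
  set v : Fin (b' + 1) → Fin n := γ (Fin.snoc w' j) with hv
  obtain ⟨vf, hvf⟩ := exists_ofFn (k := b' + 1) (lmV θ j (List.ofFn v))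
    (by rw [lmV_length]; simp)
  have h1 : mvV θ (List.ofFn (Fin.snoc w' j)) (List.ofFn v) = List.ofFn (γ (Fin.snoc w' j)) :=
    (mv_eq_per hcomm hS hT hper hvec (Fin.snoc w' j) v).1
  calc lmV θ i (List.ofFn (γ (Fin.snoc w' j)))
      = lmV θ i (mvV θ (List.ofFn (Fin.snoc w' j)) (List.ofFn v)) := by rw [h1]
    _ = mvV θ (i :: List.ofFn (Fin.snoc w' j)) (List.ofFn v) := rfl
    _ = mvV θ ((i :: List.ofFn w') ++ [j]) (List.ofFn v) := by
        rw [ofFn_snoc]; rfl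
    _ = mvV θ (i :: List.ofFn w') (lmV θ j (List.ofFn v)) := by
        rw [mvV_append]
        try rfl
    _ = mvV θ (List.ofFn (Fin.cons i w')) (List.ofFn vf) := by
        rw [ofFn_cons, hvf]
        try rfl
    _ = List.ofFn (γ (Fin.cons i w')) :=
        (mv_eq_per hcomm hS hT hper hvec (Fin.cons i w') vf).1

lemma lmI_gamma (i : Fin m) (w' : Fin a' → Fin m) (j : Fin m) :
    lmI θ i (List.ofFn (γ (Fin.snoc w' j))) = j := by
  have haux : ∀ (v : Fin (b' + 1) → Fin n) (vf : Fin (b' + 1) → Fin n),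
      lmV θ j (List.ofFn v) = List.ofFn vf →
      lmI θ i (List.ofFn (γ (Fin.snoc w' j))) = (γ.symm vf) 0 := by
    intro v vf hvf
    have h1 : mvV θ (List.ofFn (Fin.snoc w' j)) (List.ofFn v) =
        List.ofFn (γ (Fin.snoc w' j)) :=
      (mv_eq_per hcomm hS hT hper hvec (Fin.snoc w' j) v).1
    have h2 : mvI θ (List.ofFn (Fin.snoc w' j)) (List.ofFn v) =
        List.ofFn (γ.symm v) :=
      (mv_eq_per hcomm hS hT hper hvec (Fin.snoc w' j) v).2
    have way1 : mvI θ (i :: List.ofFn (Fin.snoc w' j)) (List.ofFn v) =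
        lmI θ i (List.ofFn (γ (Fin.snoc w' j))) :: List.ofFn (γ.symm v) := by
      show lmI θ i (mvV θ (List.ofFn (Fin.snoc w' j)) (List.ofFn v)) ::
          mvI θ (List.ofFn (Fin.snoc w' j)) (List.ofFn v) = _
      rw [h1, h2]
    have way2 : mvI θ (i :: List.ofFn (Fin.snoc w' j)) (List.ofFn v) =
        List.ofFn (γ.symm vf) ++ mvI θ [j] (List.ofFn v) := by
      have e1 : i :: List.ofFn (Fin.snoc w' j) = (i :: List.ofFn w') ++ [j] := by
        rw [ofFn_snoc]; rfl
      rw [e1, mvI_append]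
      congr 1
      have e2 : mvV θ [j] (List.ofFn v) = List.ofFn vf := by
        rw [← hvf]; rfl
      rw [e2, show (i :: List.ofFn w') = List.ofFn (Fin.cons i w') from (ofFn_cons i w').symm]
      exact (mv_eq_per hcomm hS hT hper hvec (Fin.cons i w') vf).2
    rw [way1] at way2
    rw [show List.ofFn (γ.symm vf) = (γ.symm vf) 0 :: List.ofFn (fun k => (γ.symm vf) k.succ)
      from by simp [List.ofFn_succ]] at way2
    rw [List.cons_append] at way2
    exact (List.cons.injEq _ _ _ _ ▸ way2).1
  have h := haux (γ (Fin.snoc w' j)) (γ (Fin.cons j w'))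
    (lmV_gamma hcomm hS hT hper hvec j w' j)
  rw [h, Equiv.symm_apply_apply]
  simp

lemma star_star_rel (i : Fin m) (w' : Fin a' → Fin m) (j : Fin m) :
    S i * fnWordOp T (γ (Fin.snoc w' j)) = fnWordOp T (γ (Fin.cons i w')) * S j := by
  have h := lm_op hcomm (List.ofFn (γ (Fin.snoc w' j))) i
  rw [lmV_gamma hcomm hS hT hper hvec i w' j, lmI_gamma hcomm hS hT hper hvec i w' j] at h
  exact h

end WithHyps

end GammaMoves
section CoreCommute

variable {H : Type*} [NormedAddCommGroup H] [InnerProductSpace ℂ H] [CompleteSpace H]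
variable {m n a' b' : ℕ}
variable {S : Fin m → H →L[ℂ] H} {T : Fin n → H →L[ℂ] H} {θ : Equiv.Perm (Fin m × Fin n)}
variable {γ : (Fin (a' + 1) → Fin m) ≃ (Fin (b' + 1) → Fin n)}

section WithHyps2

variable (hcomm : ∀ i j, S i * T j = T (θ (i, j)).2 * S (θ (i, j)).1)
variable (hS : ∀ i i', star (S i) * S i' = if i = i' then 1 else 0)
variable (hT : ∀ j j', star (T j) * T j' = if j = j' then 1 else 0)
variable (hS3 : ∑ i, S i * star (S i) = 1)
variable (hT3 : ∑ j, T j * star (T j) = 1)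
variable (hper : ∀ (u : Fin (a' + 1) → Fin m) (v : Fin (b' + 1) → Fin n),
  fnWordOp S u * fnWordOp T v = fnWordOp T (γ u) * fnWordOp S (γ.symm v))
variable (hvec : ∃ ζ : H, ζ ≠ 0)

include hcomm hS hT hS3 hper hvec in
lemma Wop_comm_S (i : Fin m) :
    (∑ u : Fin (a' + 1) → Fin m, fnWordOp T (γ u) * star (fnWordOp S u)) * S i =
      S i * (∑ u : Fin (a' + 1) → Fin m, fnWordOp T (γ u) * star (fnWordOp S u)) := by
  have lhs : (∑ u : Fin (a' + 1) → Fin m, fnWordOp T (γ u) * star (fnWordOp S u)) * S i =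
      ∑ w' : Fin a' → Fin m, fnWordOp T (γ (Fin.cons i w')) * star (fnWordOp S w') := by
    rw [Finset.sum_mul,
      ← Equiv.sum_comp (Fin.consEquiv (fun _ : Fin (a' + 1) => Fin m))
        (fun u => fnWordOp T (γ u) * star (fnWordOp S u) * S i), Fintype.sum_prod_type]
    have hterm : ∀ (i' : Fin m) (w' : Fin a' → Fin m),
        fnWordOp T (γ (Fin.cons i' w')) * star (fnWordOp S (Fin.cons i' w')) * S i =
          if i' = i then fnWordOp T (γ (Fin.cons i' w')) * star (fnWordOp S w') else 0 := by
      intro i' w'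
      rw [fnWordOp_cons, star_mul, mul_assoc, mul_assoc, hS i' i]
      by_cases h : i' = i
      · rw [if_pos h, if_pos h, mul_one]
      · rw [if_neg h, if_neg h, mul_zero, mul_zero]
    calc ∑ i' : Fin m, ∑ w' : Fin a' → Fin m,
          fnWordOp T (γ (Fin.consEquiv (fun _ : Fin (a' + 1) => Fin m) (i', w'))) *
            star (fnWordOp S (Fin.consEquiv (fun _ : Fin (a' + 1) => Fin m) (i', w'))) * S i
        = ∑ i' : Fin m, ∑ w' : Fin a' → Fin m,
            (if i' = i then fnWordOp T (γ (Fin.cons i' w')) * star (fnWordOp S w') else 0) := by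
          refine Finset.sum_congr rfl fun i' _ => Finset.sum_congr rfl fun w' _ => ?_
          rw [show (Fin.consEquiv (fun _ : Fin (a' + 1) => Fin m)) (i', w') = Fin.cons i' w'
            from rfl]
          exact hterm i' w'
      _ = ∑ w' : Fin a' → Fin m, ∑ i' : Fin m,
            (if i' = i then fnWordOp T (γ (Fin.cons i' w')) * star (fnWordOp S w') else 0) :=
          Finset.sum_comm
      _ = ∑ w' : Fin a' → Fin m, fnWordOp T (γ (Fin.cons i w')) * star (fnWordOp S w') := by
          refine Finset.sum_congr rfl fun w' _ => ?_
          rw [Finset.sum_ite_eq' Finset.univ i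
            (fun i' => fnWordOp T (γ (Fin.cons i' w')) * star (fnWordOp S w'))]
          simp
  have rhs : S i * (∑ u : Fin (a' + 1) → Fin m, fnWordOp T (γ u) * star (fnWordOp S u)) =
      ∑ w' : Fin a' → Fin m, fnWordOp T (γ (Fin.cons i w')) * star (fnWordOp S w') := by
    rw [Finset.mul_sum,
      ← Equiv.sum_comp (Fin.snocEquiv (fun _ : Fin (a' + 1) => Fin m))
        (fun u => S i * (fnWordOp T (γ u) * star (fnWordOp S u))), Fintype.sum_prod_type]
    have hterm : ∀ (j : Fin m) (w' : Fin a' → Fin m),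
        S i * (fnWordOp T (γ (Fin.snoc w' j)) * star (fnWordOp S (Fin.snoc w' j))) =
          fnWordOp T (γ (Fin.cons i w')) * (S j * star (S j)) * star (fnWordOp S w') := by
      intro j w'
      rw [fnWordOp_snoc, star_mul, ← mul_assoc, ← mul_assoc,
        star_star_rel hcomm hS hT hper hvec i w' j]
      noncomm_ring
    calc ∑ j : Fin m, ∑ w' : Fin a' → Fin m,
          S i * (fnWordOp T (γ (Fin.snocEquiv (fun _ : Fin (a' + 1) => Fin m) (j, w'))) *
            star (fnWordOp S (Fin.snocEquiv (fun _ : Fin (a' + 1) => Fin m) (j, w'))))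
        = ∑ w' : Fin a' → Fin m, ∑ j : Fin m,
            fnWordOp T (γ (Fin.cons i w')) * (S j * star (S j)) * star (fnWordOp S w') := by
          rw [Finset.sum_comm]
          refine Finset.sum_congr rfl fun w' _ => Finset.sum_congr rfl fun j _ => ?_
          rw [show (Fin.snocEquiv (fun _ : Fin (a' + 1) => Fin m)) (j, w') = Fin.snoc w' j
            from rfl]
          exact hterm j w'
      _ = ∑ w' : Fin a' → Fin m, fnWordOp T (γ (Fin.cons i w')) * star (fnWordOp S w') := by
          refine Finset.sum_congr rfl fun w' _ => ?_
          calc ∑ j : Fin m, fnWordOp T (γ (Fin.cons i w')) * (S j * star (S j)) *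
                star (fnWordOp S w')
              = fnWordOp T (γ (Fin.cons i w')) * (∑ j : Fin m, S j * star (S j)) *
                star (fnWordOp S w') := by
                rw [Finset.mul_sum, Finset.sum_mul]
            _ = _ := by rw [hS3, mul_one]
  rw [lhs, rhs]

include hcomm hS hT hT3 hper hvec in
lemma starWop_comm_S (i : Fin m) :
    (∑ u : Fin (a' + 1) → Fin m, fnWordOp S u * star (fnWordOp T (γ u))) * S i =
      S i * (∑ u : Fin (a' + 1) → Fin m, fnWordOp S u * star (fnWordOp T (γ u))) := by
  have hTsum : ∑ p : Fin m × (Fin a' → Fin m),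
      fnWordOp T (γ (Fin.snoc p.2 p.1)) * star (fnWordOp T (γ (Fin.snoc p.2 p.1))) = 1 := by
    have h0 := sum_fnWordOp_mul_star T hT3 (b' + 1)
    rw [← Equiv.sum_comp ((Fin.snocEquiv (fun _ : Fin (a' + 1) => Fin m)).trans γ)
      (fun v => fnWordOp T v * star (fnWordOp T v))] at h0
    exact h0
  have collapse : ∀ p : Fin m × (Fin a' → Fin m),
      (∑ u : Fin (a' + 1) → Fin m, fnWordOp S u * star (fnWordOp T (γ u))) *
          (fnWordOp T (γ (Fin.cons i p.2))) =
        fnWordOp S (Fin.cons i p.2) := by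
    intro p
    rw [Finset.sum_mul]
    have hterm : ∀ u : Fin (a' + 1) → Fin m,
        fnWordOp S u * star (fnWordOp T (γ u)) * fnWordOp T (γ (Fin.cons i p.2)) =
          if u = Fin.cons i p.2 then fnWordOp S u else 0 := by
      intro u
      rw [mul_assoc, fnWordOp_star_mul T hT (γ u) (γ (Fin.cons i p.2))]
      by_cases h : u = Fin.cons i p.2
      · rw [if_pos (by rw [h]), if_pos h, mul_one]
      · rw [if_neg (fun hh => h (γ.injective hh)), if_neg h, mul_zero]
    simp_rw [hterm]
    rw [Finset.sum_ite_eq' Finset.univ (Fin.cons i p.2) (fun u => fnWordOp S u)]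
    simp
  calc (∑ u : Fin (a' + 1) → Fin m, fnWordOp S u * star (fnWordOp T (γ u))) * S i
      = (∑ u : Fin (a' + 1) → Fin m, fnWordOp S u * star (fnWordOp T (γ u))) * S i * 1 :=
        (mul_one _).symm
    _ = ∑ p : Fin m × (Fin a' → Fin m),
          (∑ u : Fin (a' + 1) → Fin m, fnWordOp S u * star (fnWordOp T (γ u))) *
            (S i * (fnWordOp T (γ (Fin.snoc p.2 p.1)) * star (fnWordOp T (γ (Fin.snoc p.2 p.1))))) := by
        rw [← hTsum, Finset.mul_sum]
        exact Finset.sum_congr rfl fun p _ => by rw [mul_assoc]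
    _ = ∑ p : Fin m × (Fin a' → Fin m),
          S i * (fnWordOp S (Fin.snoc p.2 p.1) * star (fnWordOp T (γ (Fin.snoc p.2 p.1)))) := by
        refine Finset.sum_congr rfl fun p _ => ?_
        rw [← mul_assoc (S i), star_star_rel hcomm hS hT hper hvec i p.2 p.1,
          mul_assoc (fnWordOp T (γ (Fin.cons i p.2))), ← mul_assoc _ (fnWordOp T (γ (Fin.cons i p.2))),
          collapse p, fnWordOp_cons, fnWordOp_snoc]
        noncomm_ring
    _ = S i * (∑ u : Fin (a' + 1) → Fin m, fnWordOp S u * star (fnWordOp T (γ u))) := by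
        rw [Finset.mul_sum,
          ← Equiv.sum_comp (Fin.snocEquiv (fun _ : Fin (a' + 1) => Fin m))
            (fun u => S i * (fnWordOp S u * star (fnWordOp T (γ u))))]
        rfl

end WithHyps2

end CoreCommute
section ScalarLemma

open Polynomial

variable {H : Type*} [NormedAddCommGroup H] [InnerProductSpace ℂ H] [CompleteSpace H]

lemma commute_cfc' {A B : H →L[ℂ] H} (hA : IsSelfAdjoint A) (hc : Commute B A)
    (g : ℝ → ℝ) (hg : Continuous g) : Commute B (cfc g A) := by
  letI : CompactSpace (spectrum ℝ A) := ContinuousFunctionalCalculus.compactSpace_spectrum A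
  rw [cfc_apply g A hA hg.continuousOn]
  let Z : Subalgebra ℝ C(spectrum ℝ A, ℝ) :=
    (Subalgebra.centralizer ℝ {B}).comap (cfcHom hA (R := ℝ)).toAlgHom
  have hmemZ : ∀ f, f ∈ Z ↔ B * (cfcHom hA (R := ℝ)) f = (cfcHom hA (R := ℝ)) f * B := by
    intro f
    constructor
    · intro hf
      have := (Subalgebra.mem_centralizer_iff ℝ).mp hf B rfl
      exact this
    · intro hf
      exact (Subalgebra.mem_centralizer_iff ℝ).mpr (by rintro g rfl; exact hf)
  have hZc : IsClosed (Z : Set C(spectrum ℝ A, ℝ)) := by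
    have h1 : (Z : Set C(spectrum ℝ A, ℝ)) =
        (cfcHom hA (R := ℝ)) ⁻¹' {x | B * x = x * B} := by
      ext f
      simpa [Set.mem_preimage] using hmemZ f
    rw [h1]
    apply IsClosed.preimage (cfcHom_continuous hA)
    exact isClosed_eq (continuous_const.mul continuous_id) (continuous_id.mul continuous_const)
  have hXmem : (Polynomial.toContinuousMapOnAlgHom (spectrum ℝ A) Polynomial.X) ∈ Z := by
    rw [hmemZ]
    have h2 : ((Polynomial.toContinuousMapOnAlgHom (spectrum ℝ A) Polynomial.X) :
        C(spectrum ℝ A, ℝ)) = (ContinuousMap.id ℝ).restrict (spectrum ℝ A) := by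
      ext x; simp
    rw [h2, cfcHom_id hA]
    exact hc
  have hle : polynomialFunctions (spectrum ℝ A) ≤ Z := by
    rw [polynomialFunctions.eq_adjoin_X]
    exact Algebra.adjoin_le (by simpa using hXmem)
  have htop : (⊤ : Subalgebra ℝ C(spectrum ℝ A, ℝ)) ≤ Z := by
    rw [← polynomialFunctions.topologicalClosure (spectrum ℝ A)]
    exact Subalgebra.topologicalClosure_minimal hle hZc
  exact (hmemZ _).mp (htop Algebra.mem_top)

lemma selfAdjoint_commuting_is_scalar
    {m n : ℕ} {θ : Equiv.Perm (Fin m × Fin n)}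
    (ρ : TwoGraphRep m n θ H) (hirr : ρ.Irreducible)
    (hnt : ∃ ζ : H, ζ ≠ 0)
    (A : H →L[ℂ] H) (hA : IsSelfAdjoint A)
    (hAS : ∀ i, Commute A (ρ.S i)) (hAT : ∀ j, Commute A (ρ.T j)) :
    ∃ α : ℝ, A = algebraMap ℝ (H →L[ℂ] H) α := by
  obtain ⟨ζ₀, hζ₀⟩ := hnt
  have hnontriv : Nontrivial (H →L[ℂ] H) := by
    refine ⟨⟨1, 0, fun h => hζ₀ ?_⟩⟩
    calc ζ₀ = (1 : H →L[ℂ] H) ζ₀ := rfl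
      _ = (0 : H →L[ℂ] H) ζ₀ := by rw [h]
      _ = 0 := rfl
  have hspec : (spectrum ℝ A).Nonempty :=
    ContinuousFunctionalCalculus.spectrum_nonempty A hA
  -- Any continuous real function of A commutes with everything in sight.
  have key : ∀ (g : ℝ → ℝ), Continuous g → cfc g A ≠ 0 → ∀ z : H,
      z ∈ (LinearMap.range ((cfc g A : H →L[ℂ] H) : H →ₗ[ℂ] H)).topologicalClosure := by
    intro g hg hX0 z
    set Xop : H →L[ℂ] H := cfc g A with hXop
    have hXsa : IsSelfAdjoint Xop := cfc_predicate g A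
    set M : Submodule ℂ H :=
      (LinearMap.range ((Xop : H →L[ℂ] H) : H →ₗ[ℂ] H)).topologicalClosure with hM
    have hMclosed : IsClosed (M : Set H) := Submodule.isClosed_topologicalClosure _
    have hinv : ∀ (Bop : H →L[ℂ] H), Commute Bop Xop → ∀ w ∈ M, Bop w ∈ M := by
      intro Bop hBX w hw
      have hmaps : Set.MapsTo Bop
          ((LinearMap.range ((Xop : H →L[ℂ] H) : H →ₗ[ℂ] H)) : Set H)
          ((LinearMap.range ((Xop : H →L[ℂ] H) : H →ₗ[ℂ] H)) : Set H) := by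
        rintro _ ⟨y, rfl⟩
        refine ⟨Bop y, ?_⟩
        have := congrArg (fun (Y : H →L[ℂ] H) => Y y) hBX.eq
        simpa using this.symm
      have hw' : w ∈ closure
          ((LinearMap.range ((Xop : H →L[ℂ] H) : H →ₗ[ℂ] H)) : Set H) := hw
      exact map_mem_closure Bop.continuous hw' hmaps
    have hcomm_star : ∀ (Bop : H →L[ℂ] H), Commute Bop Xop → Commute (star Bop) Xop := by
      intro Bop hBX
      have h1 := congrArg star hBX.eq
      rw [star_mul, star_mul, hXsa.star_eq] at h1
      exact h1.symm
    have hMS : ∀ i, ∀ w ∈ M, ρ.S i w ∈ M := fun i =>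
      hinv (ρ.S i) (commute_cfc' hA (hAS i).symm g hg)
    have hMSstar : ∀ i, ∀ w ∈ M, star (ρ.S i) w ∈ M := fun i =>
      hinv (star (ρ.S i)) (hcomm_star _ (commute_cfc' hA (hAS i).symm g hg))
    have hMT : ∀ j, ∀ w ∈ M, ρ.T j w ∈ M := fun j =>
      hinv (ρ.T j) (commute_cfc' hA (hAT j).symm g hg)
    have hMTstar : ∀ j, ∀ w ∈ M, star (ρ.T j) w ∈ M := fun j =>
      hinv (star (ρ.T j)) (hcomm_star _ (commute_cfc' hA (hAT j).symm g hg))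
    rcases hirr M hMclosed hMS hMSstar hMT hMTstar with hbot | htop
    · exfalso
      apply hX0
      ext w
      have : Xop w ∈ M := Submodule.le_topologicalClosure _ (LinearMap.mem_range_self _ w)
      rw [hbot] at this
      simpa using this
    · rw [htop]; trivial
  -- the spectrum is a subsingleton
  have hsub : ∀ x ∈ spectrum ℝ A, ∀ y ∈ spectrum ℝ A, x = y := by
    by_contra hcon
    push_neg at hcon
    obtain ⟨x, hx, y, hy, hxy⟩ := hcon
    set r : ℝ := |x - y| / 2 with hr
    have hrpos : 0 < r := by
      have : 0 < |x - y| := abs_pos.mpr (sub_ne_zero.mpr hxy)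
      positivity
    set f : ℝ → ℝ := fun t => max 0 (r - |t - x|) with hf_def
    set g : ℝ → ℝ := fun t => max 0 (r - |t - y|) with hg_def
    have hf : Continuous f := by
      apply continuous_const.max
      exact continuous_const.sub ((continuous_id.sub continuous_const).abs)
    have hg : Continuous g := by
      apply continuous_const.max
      exact continuous_const.sub ((continuous_id.sub continuous_const).abs)
    have hfg : ∀ t, f t * g t = 0 := by
      intro t
      rcases le_or_gt (r - |t - x|) 0 with h | h
      · have : f t = 0 := max_eq_left h
        rw [this, zero_mul]
      · have habs : |x - y| ≤ |t - x| + |t - y| := by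
          calc |x - y| = |(x - t) + (t - y)| := by ring_nf
            _ ≤ |x - t| + |t - y| := abs_add_le _ _
            _ = |t - x| + |t - y| := by rw [abs_sub_comm]
        have h2 : r - |t - y| ≤ 0 := by
          have hlt : |t - x| < r := by linarith
          have : r ≤ |t - y| := by
            have h2r : |x - y| = 2 * r := by rw [hr]; ring
            linarith
          linarith
        have : g t = 0 := max_eq_left h2
        rw [this, mul_zero]
    have hfx : f x = r := by
      rw [hf_def]
      simp
      linarith
    have hgy : g y = r := by
      rw [hg_def]
      simp
      linarith
    have hgA : cfc g A ≠ 0 := by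
      intro h0
      have hms := cfc_map_spectrum (R := ℝ) g A hA hg.continuousOn
      rw [h0] at hms
      have : g y ∈ spectrum ℝ (0 : H →L[ℂ] H) := by
        rw [hms]; exact ⟨y, hy, rfl⟩
      rw [spectrum.zero_eq] at this
      rw [hgy] at this
      simp at this
      linarith
    have hfA0 : cfc f A = 0 := by
      have hprod : cfc f A * cfc g A = 0 := by
        rw [← cfc_mul f g A hf.continuousOn hg.continuousOn]
        have : (fun x => f x * g x) = fun _ => (0 : ℝ) := funext hfg
        rw [this, cfc_const_zero]
      ext w
      have hwM := key g hg hgA w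
      have : w ∈ closure ((LinearMap.range ((cfc g A : H →L[ℂ] H) : H →ₗ[ℂ] H)) : Set H) := hwM
      have hker : ((LinearMap.range ((cfc g A : H →L[ℂ] H) : H →ₗ[ℂ] H)) : Set H) ⊆
          {w' : H | cfc f A w' = 0} := by
        rintro _ ⟨y', rfl⟩
        show cfc f A ((cfc g A) y') = 0
        have := congrArg (fun (Y : H →L[ℂ] H) => Y y') hprod
        simpa using this
      have hclosed : IsClosed {w' : H | cfc f A w' = 0} :=
        isClosed_eq (cfc f A).continuous continuous_const
      have := closure_minimal hker hclosed this
      simpa using this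
    -- but f x = r ≠ 0 and x ∈ spectrum
    have hms := cfc_map_spectrum (R := ℝ) f A hA hf.continuousOn
    rw [hfA0] at hms
    have : f x ∈ spectrum ℝ (0 : H →L[ℂ] H) := by
      rw [hms]; exact ⟨x, hx, rfl⟩
    rw [spectrum.zero_eq, hfx] at this
    simp at this
    linarith
  obtain ⟨α, hα⟩ := hspec
  refine ⟨α, ?_⟩
  have hAid : A = cfc (id : ℝ → ℝ) A := (cfc_id ℝ A hA).symm
  have hcongr : cfc (id : ℝ → ℝ) A = cfc (fun _ => α) A :=
    cfc_congr (fun x hxs => hsub x hxs α hα)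
  rw [hAid, hcongr, cfc_const α A hA]

end ScalarLemma
/-- Irreducible atomic representations of type 1 or 3b(ii) of a periodic 2-graph have no
wandering vectors. -/
theorem statement4 {m n : ℕ} (hm : 2 ≤ m) (hn : 2 ≤ n)
    {θ : Equiv.Perm (Fin m × Fin n)} {H : Type*}
    [NormedAddCommGroup H] [InnerProductSpace ℂ H] [CompleteSpace H]
    (ρ : TwoGraphRep m n θ H) (hCuntz : ρ.CuntzType) (hirr : ρ.Irreducible)
    {Λ : Type*} (ξ : HilbertBasis Λ ℂ H) (hAtomic : ρ.AtomicBasis ξ)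
    (a b : ℕ) (ha : 0 < a) (hb : 0 < b)
    (γ : (Fin a → Fin m) ≃ (Fin b → Fin n))
    (hper : ∀ (u : Fin a → Fin m) (v : Fin b → Fin n),
      fnWordOp ρ.S u * fnWordOp ρ.T v = fnWordOp ρ.T (γ u) * fnWordOp ρ.S (γ.symm v))
    (hcase :
      ((∃ t, ρ.HasBlueRing (ξ t)) ∧ (∃ t, ρ.HasRedRing (ξ t))) ∨
      ((∀ t, ¬ ρ.HasBlueRing (ξ t) ∧ ¬ ρ.HasRedRing (ξ t) ∧ ¬ ρ.HasMixedRing (ξ t)) ∧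
        ∃ (k l : ℕ) (_ : 0 < k) (_ : 0 < l) (t0 : Λ)
          (u : ℕ → (Fin k → Fin m)) (v : ℕ → (Fin l → Fin n)),
          (∀ e : ℕ, fnWordOp ρ.T (v e) * fnWordOp ρ.S (u (e + 1)) =
              fnWordOp ρ.S (u e) * fnWordOp ρ.T (v (e + 1))) ∧
          (∀ t : ℕ,
            (star (((List.range (t + 1)).map (fun e => fnWordOp ρ.T (v e))).prod)) (ξ t0) ≠ 0 ∧
            ∃ c : ℂ, ‖c‖ = 1 ∧
              (star (((List.range (t + 1)).map (fun e => fnWordOp ρ.T (v e))).prod)) (ξ t0) =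
                c • (star (((List.range (t + 1)).map (fun e => fnWordOp ρ.S (u e))).prod))
                  (ξ t0)))) :
    ¬ ∃ ζ : H, ρ.IsWanderingRep ζ := by
  rintro ⟨ζ, hζnorm, hw⟩
  obtain ⟨a', rfl⟩ : ∃ a', a = a' + 1 := ⟨a - 1, by omega⟩
  obtain ⟨b', rfl⟩ : ∃ b', b = b' + 1 := ⟨b - 1, by omega⟩
  have hζ0 : ζ ≠ 0 := fun h => by simp [h] at hζnorm
  have hvec : ∃ ζ0 : H, ζ0 ≠ 0 := ⟨ζ, hζ0⟩
  have hS := ρ.isometS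
  have hT := ρ.isometT
  have hcomm := ρ.comm
  have hS3 := hCuntz.1
  have hT3 := hCuntz.2
  set W : H →L[ℂ] H :=
    ∑ u : Fin (a' + 1) → Fin m, fnWordOp ρ.T (γ u) * star (fnWordOp ρ.S u) with hWdef
  have hWS : ∀ i, W * ρ.S i = ρ.S i * W := by
    intro i
    rw [hWdef]
    exact Wop_comm_S hcomm hS hT hS3 hper hvec i
  have hstarW : star W = ∑ u : Fin (a' + 1) → Fin m,
      fnWordOp ρ.S u * star (fnWordOp ρ.T (γ u)) := by
    rw [hWdef, star_sum]
    exact Finset.sum_congr rfl fun u _ => by rw [star_mul, star_star]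
  have hsWS : ∀ i, star W * ρ.S i = ρ.S i * star W := by
    intro i
    rw [hstarW]
    exact starWop_comm_S hcomm hS hT hT3 hper hvec i
  -- the swapped system
  set θ' : Equiv.Perm (Fin n × Fin m) :=
    (Equiv.prodComm (Fin n) (Fin m)).trans
      (θ.symm.trans (Equiv.prodComm (Fin m) (Fin n))) with hθ'
  have hcomm' : ∀ j i, ρ.T j * ρ.S i =
      ρ.S (θ' (j, i)).2 * ρ.T (θ' (j, i)).1 := by
    intro j i
    have hp := hcomm (θ.symm (i, j)).1 (θ.symm (i, j)).2
    rw [show ((θ.symm (i, j)).1, (θ.symm (i, j)).2) = θ.symm (i, j) from rfl,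
      Equiv.apply_symm_apply] at hp
    have h1 : (θ' (j, i)).2 = (θ.symm (i, j)).1 := rfl
    have h2 : (θ' (j, i)).1 = (θ.symm (i, j)).2 := rfl
    rw [h1, h2]
    exact hp.symm
  have hper' : ∀ (u : Fin (b' + 1) → Fin n) (v : Fin (a' + 1) → Fin m),
      fnWordOp ρ.T u * fnWordOp ρ.S v =
        fnWordOp ρ.S (γ.symm u) * fnWordOp ρ.T (γ.symm.symm v) := by
    intro u v
    have hp := hper (γ.symm u) (γ v)
    rw [Equiv.apply_symm_apply, Equiv.symm_apply_apply] at hp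
    rw [Equiv.symm_symm]
    exact hp.symm
  have hswapW : (∑ u : Fin (b' + 1) → Fin n,
      fnWordOp ρ.S (γ.symm u) * star (fnWordOp ρ.T u)) = star W := by
    rw [hstarW, ← Equiv.sum_comp γ
      (fun v => fnWordOp ρ.S (γ.symm v) * star (fnWordOp ρ.T v))]
    exact Finset.sum_congr rfl fun u _ => by rw [Equiv.symm_apply_apply]
  have hsWT : ∀ j, star W * ρ.T j = ρ.T j * star W := by
    intro j
    rw [← hswapW]
    exact Wop_comm_S hcomm' hT hS hT3 hper' hvec j
  have hswapW2 : (∑ u : Fin (b' + 1) → Fin n,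
      fnWordOp ρ.T u * star (fnWordOp ρ.S (γ.symm u))) = W := by
    rw [hWdef, ← Equiv.sum_comp γ
      (fun v => fnWordOp ρ.T v * star (fnWordOp ρ.S (γ.symm v)))]
    exact Finset.sum_congr rfl fun u _ => by rw [Equiv.symm_apply_apply]
  have hWT : ∀ j, W * ρ.T j = ρ.T j * W := by
    intro j
    rw [← hswapW2]
    exact starWop_comm_S hcomm' hT hS hS3 hper' hvec j
  -- self-adjoint combinations
  set A : H →L[ℂ] H := W + star W with hAdef
  set Bop : H →L[ℂ] H := Complex.I • W - Complex.I • star W with hBdef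
  have hAsa : IsSelfAdjoint A := by
    rw [IsSelfAdjoint, hAdef, star_add, star_star]
    exact add_comm _ _
  have hBsa : IsSelfAdjoint Bop := by
    rw [IsSelfAdjoint, hBdef, star_sub, star_smul, star_smul, star_star,
      Complex.star_def, Complex.conj_I, neg_smul, neg_smul]
    abel
  have hAS : ∀ i, Commute A (ρ.S i) := by
    intro i
    show A * ρ.S i = ρ.S i * A
    rw [hAdef, add_mul, mul_add, hWS i, hsWS i]
  have hAT : ∀ j, Commute A (ρ.T j) := by
    intro j
    show A * ρ.T j = ρ.T j * A
    rw [hAdef, add_mul, mul_add, hWT j, hsWT j]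
  have hBS : ∀ i, Commute Bop (ρ.S i) := by
    intro i
    show Bop * ρ.S i = ρ.S i * Bop
    rw [hBdef, sub_mul, mul_sub, smul_mul_assoc, smul_mul_assoc, mul_smul_comm,
      mul_smul_comm, hWS i, hsWS i]
  have hBT : ∀ j, Commute Bop (ρ.T j) := by
    intro j
    show Bop * ρ.T j = ρ.T j * Bop
    rw [hBdef, sub_mul, mul_sub, smul_mul_assoc, smul_mul_assoc, mul_smul_comm,
      mul_smul_comm, hWT j, hsWT j]
  obtain ⟨α, hα⟩ := selfAdjoint_commuting_is_scalar ρ hirr hvec A hAsa hAS hAT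
  obtain ⟨β, hβ⟩ := selfAdjoint_commuting_is_scalar ρ hirr hvec Bop hBsa hBS hBT
  have halg : ∀ r : ℝ, algebraMap ℝ (H →L[ℂ] H) r = ((r : ℂ)) • (1 : H →L[ℂ] H) := by
    intro r
    rw [IsScalarTower.algebraMap_apply ℝ ℂ (H →L[ℂ] H), Algebra.algebraMap_eq_smul_one]
    norm_cast
  have hWpW : W + star W = ((α : ℂ)) • (1 : H →L[ℂ] H) := by
    rw [← halg]
    exact hα
  have hWmW : W - star W = ((-Complex.I) * (β : ℂ)) • (1 : H →L[ℂ] H) := by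
    have h1 : Complex.I • (W - star W) = (β : ℂ) • (1 : H →L[ℂ] H) := by
      rw [smul_sub, ← hBdef, hβ, halg]
    calc W - star W = ((-Complex.I) * Complex.I) • (W - star W) := by
          rw [show (-Complex.I) * Complex.I = 1 by
            rw [neg_mul, Complex.I_mul_I, neg_neg], one_smul]
      _ = (-Complex.I) • (Complex.I • (W - star W)) := by rw [mul_smul]
      _ = (-Complex.I) • ((β : ℂ) • (1 : H →L[ℂ] H)) := by rw [h1]
      _ = ((-Complex.I) * (β : ℂ)) • (1 : H →L[ℂ] H) := by rw [smul_smul]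
  have hWW : (2 : ℂ) • W = (((α : ℂ)) + (-Complex.I) * (β : ℂ)) • (1 : H →L[ℂ] H) := by
    calc (2 : ℂ) • W = (W + star W) + (W - star W) := by rw [two_smul]; abel
      _ = _ := by rw [hWpW, hWmW, ← add_smul]
  set c : ℂ := (2 : ℂ)⁻¹ * (((α : ℂ)) + (-Complex.I) * (β : ℂ)) with hc
  have hWc : W = c • (1 : H →L[ℂ] H) := by
    calc W = (2 : ℂ)⁻¹ • ((2 : ℂ) • W) := by
          rw [smul_smul]
          norm_num
      _ = (2 : ℂ)⁻¹ • ((((α : ℂ)) + (-Complex.I) * (β : ℂ)) • (1 : H →L[ℂ] H)) := by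
          rw [hWW]
      _ = c • (1 : H →L[ℂ] H) := by rw [smul_smul, hc]
  -- collapse on a fixed word
  set u₀ : Fin (a' + 1) → Fin m := fun _ => ⟨0, by omega⟩ with hu₀
  have hWu : W * fnWordOp ρ.S u₀ = fnWordOp ρ.T (γ u₀) := by
    rw [hWdef, Finset.sum_mul]
    have hterm : ∀ u : Fin (a' + 1) → Fin m,
        fnWordOp ρ.T (γ u) * star (fnWordOp ρ.S u) * fnWordOp ρ.S u₀ =
          if u = u₀ then fnWordOp ρ.T (γ u) else 0 := by
      intro u
      rw [mul_assoc, fnWordOp_star_mul ρ.S hS u u₀]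
      by_cases h : u = u₀
      · rw [if_pos h, if_pos h, mul_one]
      · rw [if_neg h, if_neg h, mul_zero]
    simp_rw [hterm]
    rw [Finset.sum_ite_eq' Finset.univ u₀ (fun u => fnWordOp ρ.T (γ u))]
    simp
  have hTc : fnWordOp ρ.T (γ u₀) = c • fnWordOp ρ.S u₀ := by
    rw [← hWu, hWc, smul_mul_assoc, one_mul]
  have e1 : fnWordOp ρ.S u₀ = wordOp ρ.S (List.ofFn u₀) * wordOp ρ.T [] := by
    rw [wordOp_nil, mul_one]
    rfl
  have e2 : fnWordOp ρ.T (γ u₀) = wordOp ρ.S [] * wordOp ρ.T (List.ofFn (γ u₀)) := by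
    rw [wordOp_nil, one_mul]
    rfl
  have h1 : ⟪(fnWordOp ρ.S u₀) ζ, (fnWordOp ρ.S u₀) ζ⟫ = 1 := by
    rw [e1, hw (List.ofFn u₀) (List.ofFn u₀) [] [], if_pos ⟨rfl, rfl⟩]
  have h2 : ⟪(fnWordOp ρ.S u₀) ζ, (fnWordOp ρ.T (γ u₀)) ζ⟫ = 0 := by
    rw [e1, e2, hw (List.ofFn u₀) [] [] (List.ofFn (γ u₀)), if_neg]
    rintro ⟨h, -⟩
    have hlen : (List.ofFn u₀).length = 0 := by rw [h]; rfl
    simp at hlen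
  have h3 : ⟪(fnWordOp ρ.T (γ u₀)) ζ, (fnWordOp ρ.T (γ u₀)) ζ⟫ = 1 := by
    rw [e2, hw [] [] (List.ofFn (γ u₀)) (List.ofFn (γ u₀)), if_pos ⟨rfl, rfl⟩]
  rw [hTc] at h2
  have hcz : c = 0 := by
    calc c = c * ⟪(fnWordOp ρ.S u₀) ζ, (fnWordOp ρ.S u₀) ζ⟫ := by rw [h1, mul_one]
      _ = ⟪(fnWordOp ρ.S u₀) ζ, c • ((fnWordOp ρ.S u₀) ζ)⟫ := (inner_smul_right _ _ _).symm
      _ = ⟪(fnWordOp ρ.S u₀) ζ, (c • fnWordOp ρ.S u₀) ζ⟫ := by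
          rw [ContinuousLinearMap.smul_apply]
      _ = 0 := h2
  rw [hTc, hcz, zero_smul] at h3
  simp at h3
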